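/- Let a be a nonincreasing graphic integer list and a' an integer list with a ≺ a' and a ≠ a'. Then the number of simple graph realizations satisfies N_3(a) > N_3(a'): the majorized list has strictly more labeled simple graph realizations. -/

import Mathlib

open Finset

/-- Partial sum of the first `k` entries of `a`. -/
def partSum {n : ℕ} (a : Fin n → ℕ) (k : ℕ) : ℕ :=
  ∑ i : Fin n, if (i : ℕ) < k then a i else 0

/-- `a ≺ a'` : `a` is majorized by `a'`. -/
def Majorized {n : ℕ} (a a' : Fin n → ℕ) : Prop :=
  (∀ k : ℕ, partSum a k ≤ partSum a' k) ∧ ∑ i, a i = ∑ i, a' i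

/-- `a` is nonincreasing. -/
def Nonincreasing {n : ℕ} (a : Fin n → ℕ) : Prop :=
  ∀ i j : Fin n, i ≤ j → a j ≤ a i

/-- `b` is nondecreasing. -/
def Nondecreasing {n : ℕ} (b : Fin n → ℕ) : Prop :=
  ∀ i j : Fin n, i ≤ j → b i ≤ b j

/-- `a` is obtained from `a'` by a unit `(i,j)`-transfer. -/
def UnitTransfer {n : ℕ} (a' a : Fin n → ℕ) (i j : Fin n) : Prop :=
  i < j ∧ a' j + 2 ≤ a' i ∧
  a = Function.update (Function.update a' i (a' i - 1)) j (a' j + 1)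

/-- Row sum of a 0-1 matrix. -/
def rowSum {n : ℕ} (M : Fin n → Fin n → Bool) (i : Fin n) : ℕ :=
  ∑ j, if M i j then 1 else 0

/-- Column sum of a 0-1 matrix. -/
def colSum {n : ℕ} (M : Fin n → Fin n → Bool) (j : Fin n) : ℕ :=
  ∑ i, if M i j then 1 else 0

/-- Number of loop-digraph realizations of `(a,b)`:
`n×n` 0-1 matrices with row sums `b` and column sums `a`. -/
noncomputable def N1 {n : ℕ} (a b : Fin n → ℕ) : ℕ :=
  Nat.card {M : Fin n → Fin n → Bool //
    (∀ i, rowSum M i = b i) ∧ (∀ j, colSum M j = a j)}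

def LoopDigraphic {n : ℕ} (a b : Fin n → ℕ) : Prop := 0 < N1 a b

/-- Number of digraph realizations of `(a,b)`:
`n×n` 0-1 matrices with zero diagonal, row sums `b` and column sums `a`. -/
noncomputable def N2 {n : ℕ} (a b : Fin n → ℕ) : ℕ :=
  Nat.card {M : Fin n → Fin n → Bool //
    (∀ i, M i i = false) ∧ (∀ i, rowSum M i = b i) ∧ (∀ j, colSum M j = a j)}

def Digraphic {n : ℕ} (a b : Fin n → ℕ) : Prop := 0 < N2 a b

/-- Number of simple graph realizations of `a` (symmetric 0-1 adjacency matrices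
with zero diagonal and degrees `a`). -/
noncomputable def N3 {n : ℕ} (a : Fin n → ℕ) : ℕ :=
  Nat.card {M : Fin n → Fin n → Bool //
    (∀ i j, M i j = M j i) ∧ (∀ i, M i i = false) ∧ (∀ i, rowSum M i = a i)}

def Graphic {n : ℕ} (a : Fin n → ℕ) : Prop := 0 < N3 a

/-- The minconvex list for parameters `n, m`. -/
def minconvex (n m : ℕ) : Fin n → ℕ :=
  fun i => if (i : ℕ) < m % n then m / n + 1 else m / n

/-- `(a,b)` is lexicographically nonincreasing. -/
def LexNonincreasing {n : ℕ} (a b : Fin n → ℕ) : Prop :=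
  ∀ i j : Fin n, i ≤ j → (a j < a i ∨ (a i = a j ∧ b j ≤ b i))


section C1
variable {n : ℕ}

def real3 (c : Fin n → ℕ) : Finset (Fin n → Fin n → Bool) :=
  univ.filter (fun M => (∀ i j, M i j = M j i) ∧ (∀ i, M i i = false) ∧ (∀ i, rowSum M i = c i))

lemma N3_eq_card (c : Fin n → ℕ) : N3 c = (real3 c).card := by
  rw [N3, Nat.card_eq_fintype_card, Fintype.card_subtype, real3]

lemma rowSum_comp (M : Fin n → Fin n → Bool) (τ : Equiv.Perm (Fin n)) (k : Fin n) :
    rowSum (fun x y => M (τ x) (τ y)) k = rowSum M (τ k) := by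
  rw [rowSum, rowSum]
  exact Equiv.sum_comp τ (fun l => if M (τ k) l then 1 else 0)

lemma N3_comp_perm (c : Fin n → ℕ) (σ : Equiv.Perm (Fin n)) : N3 (c ∘ σ) = N3 c := by
  unfold N3
  apply Nat.card_congr
  refine Equiv.mk (fun M => ⟨fun k l => M.1 (σ.symm k) (σ.symm l), ?_, ?_, ?_⟩)
      (fun M => ⟨fun k l => M.1 (σ k) (σ l), ?_, ?_, ?_⟩) ?_ ?_
  · intro k l; exact M.2.1 _ _
  · intro k; exact M.2.2.1 _
  · intro k
    rw [rowSum_comp M.1 σ.symm k, M.2.2.2, Function.comp, Equiv.apply_symm_apply]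
  · intro k l; exact M.2.1 _ _
  · intro k; exact M.2.2.1 _
  · intro k; rw [rowSum_comp M.1 σ k, M.2.2.2]; rfl
  · intro M; ext k l; simp
  · intro M; ext k l; simp

end C1

section C2
variable {n : ℕ}

lemma partSum_mono (f : Fin n → ℕ) {k l : ℕ} (h : k ≤ l) : partSum f k ≤ partSum f l := by
  apply Finset.sum_le_sum
  intro i _
  by_cases h1 : (i : ℕ) < k
  · rw [if_pos h1, if_pos (lt_of_lt_of_le h1 h)]
  · rw [if_neg h1]; exact Nat.zero_le _

lemma partSum_of_ge (f : Fin n → ℕ) {k : ℕ} (h : n ≤ k) : partSum f k = ∑ i, f i :=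
  Finset.sum_congr rfl (fun i _ => if_pos (lt_of_lt_of_le i.2 h))

lemma partSum_succ (f : Fin n → ℕ) (i : Fin n) :
    partSum f ((i : ℕ) + 1) = partSum f (i : ℕ) + f i := by
  rw [partSum, partSum]
  have : ∀ x : Fin n, (if (x : ℕ) < (i : ℕ) + 1 then f x else 0)
      = (if (x : ℕ) < (i : ℕ) then f x else 0) + (if x = i then f x else 0) := by
    intro x
    by_cases h1 : (x : ℕ) < (i : ℕ)
    · have : x ≠ i := by intro h; rw [h] at h1; omega
      simp [h1, this, Nat.lt_succ_of_lt]
      intro h; exact absurd h (not_lt.mpr (le_of_lt (Fin.lt_def.mpr h1)))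
    · by_cases h2 : x = i
      · simp [h2]
      · have : ¬ (x : ℕ) < (i : ℕ) + 1 := by
          have : (x : ℕ) ≠ (i : ℕ) := fun h => h2 (Fin.ext h)
          omega
        simp [h1, h2, this]
  rw [Finset.sum_congr rfl (fun x _ => this x), Finset.sum_add_distrib]
  simp

lemma eq_of_partSum_eq {a b : Fin n → ℕ} (h : ∀ k, partSum a k = partSum b k) : a = b := by
  funext i
  have h1 := partSum_succ a i
  have h2 := partSum_succ b i
  have h3 := h (i : ℕ)
  have h4 := h ((i : ℕ) + 1)
  omega

lemma sum_subset_le_partSum (b : Fin n → ℕ) (hb : Nonincreasing b) (T : Finset (Fin n)) :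
    ∑ t ∈ T, b t ≤ partSum b T.card := by
  set k := T.card with hk
  clear_value k
  induction k generalizing T with
  | zero => rw [Finset.card_eq_zero.mp hk.symm]; simp
  | succ m ih =>
    have hne : T.Nonempty := Finset.card_pos.mp (by omega)
    set t0 := T.max' hne with ht0
    have hsub : T ⊆ Finset.Iic t0 := fun x hx => Finset.mem_Iic.mpr (Finset.le_max' T x hx)
    have hcard : T.card ≤ (t0 : ℕ) + 1 := by
      calc T.card ≤ (Finset.Iic t0).card := Finset.card_le_card hsub
      _ = (t0 : ℕ) + 1 := by rw [Fin.card_Iic]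
    have hmn : m < n := by have := t0.2; omega
    have hstep : partSum b (m + 1) = partSum b m + b ⟨m, hmn⟩ := partSum_succ b ⟨m, hmn⟩
    have ht0m : b t0 ≤ b ⟨m, hmn⟩ := hb ⟨m, hmn⟩ t0 (by
      rw [Fin.le_def]; simp; omega)
    have herase : (T.erase t0).card = m := by
      rw [Finset.card_erase_of_mem (Finset.max'_mem T hne)]; omega
    have := ih (T.erase t0) herase.symm
    have hsplit : ∑ t ∈ T, b t = ∑ t ∈ T.erase t0, b t + b t0 := by
      rw [← Finset.add_sum_erase T b (Finset.max'_mem T hne)]; ring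
    omega

end C2

section C3
variable {n : ℕ}

lemma exists_sorted (f : Fin n → ℕ) : ∃ σ : Equiv.Perm (Fin n), Nonincreasing (f ∘ σ) := by
  refine ⟨(Fin.revPerm).trans (Tuple.sort f), ?_⟩
  intro i j hij
  have h1 : Fin.rev j ≤ Fin.rev i := Fin.rev_le_rev.mpr hij
  have := Tuple.monotone_sort f h1
  simpa using this

lemma card_filter_lt_le (k : ℕ) : (univ.filter (fun i : Fin n => (i : ℕ) < k)).card ≤ k := by
  have : (univ.filter (fun i : Fin n => (i : ℕ) < k)).card ≤ (Finset.range k).card := by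
    exact Finset.card_le_card_of_injOn (fun i => (i : ℕ))
      (by intro x hx; simp at hx ⊢; exact hx)
      (by intro x _ y _ h; exact Fin.ext h)
  simpa using this

lemma partSum_le_sorted (f g : Fin n → ℕ) (σ : Equiv.Perm (Fin n)) (hg : g = f ∘ σ)
    (hmono : Nonincreasing g) (k : ℕ) : partSum f k ≤ partSum g k := by
  have h1 : partSum f k = ∑ x ∈ univ.filter (fun i : Fin n => (i : ℕ) < k), f x :=
    (Finset.sum_filter _ _).symm
  set F := univ.filter (fun i : Fin n => (i : ℕ) < k) with hF
  have h2 : ∀ x ∈ F, f x = g (σ.symm x) := by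
    intro x _; rw [hg]; simp
  rw [h1, Finset.sum_congr rfl h2, ← Finset.sum_image (f := g)
    (g := fun x => σ.symm x) (by intro x _ y _ h; exact σ.symm.injective h)]
  calc ∑ t ∈ F.image (fun x => σ.symm x), g t
      ≤ partSum g (F.image (fun x => σ.symm x)).card := sum_subset_le_partSum g hmono _
    _ ≤ partSum g k := by
        apply partSum_mono
        calc (F.image (fun x => σ.symm x)).card ≤ F.card := Finset.card_image_le
          _ ≤ k := card_filter_lt_le k

end C3

section C4
variable {n : ℕ}

def muMeasure (a b : Fin n → ℕ) : ℕ := ∑ k ∈ Finset.range (n+1), (partSum b k - partSum a k)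

lemma hlp_step (a b : Fin n → ℕ) (ha : Nonincreasing a) (hb : Nonincreasing b)
    (hmaj : Majorized a b) (hne : a ≠ b) :
    ∃ (c : Fin n → ℕ) (p q : Fin n), UnitTransfer b c p q ∧ Nonincreasing c ∧ Majorized a c ∧
      muMeasure a c < muMeasure a b := by
  -- q : least index with b q < a q
  have hQex : ∃ k, b k < a k := by
    by_contra h
    push_neg at h
    apply hne
    funext k
    by_contra hk
    have hlt : a k < b k := lt_of_le_of_ne (h k) hk
    have := Finset.sum_lt_sum (fun i (_ : i ∈ univ) => h i) ⟨k, mem_univ k, hlt⟩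
    have h2 := hmaj.2
    omega
  set Q : Finset (Fin n) := univ.filter (fun k => b k < a k) with hQ
  have hQne : Q.Nonempty := ⟨hQex.choose, by simp [hQ, hQex.choose_spec]⟩
  set q := Q.min' hQne with hqdef
  have hq : b q < a q := by
    have := Q.min'_mem hQne
    simp only [hQ, mem_filter] at this
    exact this.2
  have hqmin : ∀ k, k < q → a k ≤ b k := by
    intro k hk
    by_contra h
    push_neg at h
    have : q ≤ k := Q.min'_le k (by simp [hQ, h])
    exact absurd hk (not_lt.mpr this)
  -- p : greatest index < q with a p < b p
  have hPex : ∃ k, k < q ∧ a k < b k := by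
    by_contra hP
    push_neg at hP
    have heq : ∀ k : Fin n, (k : ℕ) < (q : ℕ) → a k = b k := by
      intro k hk
      have hk' : k < q := by rwa [Fin.lt_def]
      exact le_antisymm (hqmin k hk') (hP k hk')
    have hps : partSum a (q : ℕ) = partSum b (q : ℕ) := by
      apply Finset.sum_congr rfl
      intro i _
      by_cases h : (i : ℕ) < (q : ℕ)
      · rw [if_pos h, if_pos h, heq i h]
      · rw [if_neg h, if_neg h]
    have h1 := partSum_succ a q
    have h2 := partSum_succ b q
    have h3 := hmaj.1 ((q : ℕ) + 1)
    omega
  set P : Finset (Fin n) := univ.filter (fun k => k < q ∧ a k < b k) with hPdef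
  have hPne : P.Nonempty := ⟨hPex.choose, by simp [hPdef, hPex.choose_spec.1, hPex.choose_spec.2]⟩
  set p := P.max' hPne with hpdef
  have hp : p < q ∧ a p < b p := by
    have := P.max'_mem hPne
    simp only [hPdef, mem_filter] at this
    exact this.2
  have hpq : p ≠ q := ne_of_lt hp.1
  have hmid : ∀ k, p < k → k < q → a k = b k := by
    intro k h1 h2
    refine le_antisymm (hqmin k h2) ?_
    by_contra h
    push_neg at h
    have : k ≤ p := P.le_max' k (by simp [hPdef, h2, h])
    exact absurd h1 (not_lt.mpr this)
  have hD : b q + 2 ≤ b p := by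
    have h1 : a q ≤ a p := ha p q (le_of_lt hp.1)
    omega
  have F1 : ∀ k, k < q → b q + 1 ≤ b k := by
    intro k hk
    have h1 := hqmin k hk
    have h2 : a q ≤ a k := ha k q (le_of_lt hk)
    omega
  have F2 : ∀ l, p < l → b l < b p := by
    intro l hl
    rcases lt_trichotomy l q with h | h | h
    · have h1 := hmid l hl h
      have h2 : a l ≤ a p := ha p l (le_of_lt hl)
      omega
    · subst h; omega
    · have : b l ≤ b q := hb q l (le_of_lt h)
      omega
  set c := Function.update (Function.update b p (b p - 1)) q (b q + 1) with hc
  have hcp : c p = b p - 1 := by simp [hc, Function.update_apply, hpq]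
  have hcq : c q = b q + 1 := by simp [hc, Function.update_apply]
  have hco : ∀ k, k ≠ p → k ≠ q → c k = b k := by
    intro k h1 h2
    simp [hc, Function.update_apply, h1, h2]
  have hsum : ∑ k, c k = ∑ k, b k := by
    have h1 : ∑ k, c k = (b q + 1) + ∑ k ∈ univ \ {q}, Function.update b p (b p - 1) k := by
      rw [hc]; exact Finset.sum_update_of_mem (mem_univ q) _ _
    have hpmem : p ∈ univ \ {q} := by simp [hpq]
    have h2 : ∑ k ∈ univ \ {q}, Function.update b p (b p - 1) k
        = (b p - 1) + ∑ k ∈ (univ \ {q}).erase p, b k := by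
      rw [Finset.erase_eq]
      exact Finset.sum_update_of_mem hpmem _ _
    have h3 : b q + ∑ k ∈ univ \ {q}, b k = ∑ k, b k := by
      rw [← Finset.erase_eq]
      exact Finset.add_sum_erase _ b (mem_univ q)
    have h4 : b p + ∑ k ∈ (univ \ {q}).erase p, b k = ∑ k ∈ univ \ {q}, b k :=
      Finset.add_sum_erase _ b hpmem
    omega
  have hpq' : (p : ℕ) < (q : ℕ) := hp.1
  have key : ∀ k : ℕ, (partSum c k : ℤ) + (if (p : ℕ) < k then 1 else 0)
      = (partSum b k : ℤ) + (if (q : ℕ) < k then 1 else 0) := by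
    intro k
    have cast1 : ∀ f : Fin n → ℕ, (partSum f k : ℤ) = ∑ i : Fin n, (if (i : ℕ) < k then (f i : ℤ) else 0) := by
      intro f
      rw [partSum]
      push_cast
      apply Finset.sum_congr rfl
      intro i _
      split <;> simp
    have e1 : (if (p : ℕ) < k then (1 : ℤ) else 0)
        = ∑ i : Fin n, (if i = p then (if (p : ℕ) < k then (1 : ℤ) else 0) else 0) := by
      rw [Finset.sum_ite_eq']; simp
    have e2 : (if (q : ℕ) < k then (1 : ℤ) else 0)
        = ∑ i : Fin n, (if i = q then (if (q : ℕ) < k then (1 : ℤ) else 0) else 0) := by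
      rw [Finset.sum_ite_eq']; simp
    rw [cast1 c, cast1 b, e1, e2, ← Finset.sum_add_distrib, ← Finset.sum_add_distrib]
    apply Finset.sum_congr rfl
    intro i _
    by_cases h1 : i = p
    · rw [h1, if_pos rfl, if_neg hpq, hcp]
      by_cases h2 : (p : ℕ) < k
      · rw [if_pos h2, if_pos h2, if_pos h2]
        have hbp1 : 1 ≤ b p := by omega
        push_cast [Nat.cast_sub hbp1]
        ring
      · rw [if_neg h2, if_neg h2, if_neg h2]
    · by_cases h3 : i = q
      · rw [h3, if_neg (show ¬ q = p from fun hh => hpq hh.symm), if_pos rfl, hcq]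
        by_cases h2 : (q : ℕ) < k
        · rw [if_pos h2, if_pos h2, if_pos h2]
          push_cast
          ring
        · rw [if_neg h2, if_neg h2, if_neg h2]
      · rw [hco i h1 h3, if_neg h1, if_neg h3]
  have hcb : ∀ k, partSum c k ≤ partSum b k := by
    intro k
    have := key k
    by_cases h1 : (p : ℕ) < k <;> by_cases h2 : (q : ℕ) < k <;>
      simp only [if_pos, if_neg, h1, h2, if_true, if_false] at this <;> omega
  have hstrict : ∀ k : ℕ, (p : ℕ) < k → k ≤ (q : ℕ) → partSum a k + 1 ≤ partSum b k := by
    intro k h1 h2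
    have hlt : partSum a k < partSum b k := by
      apply Finset.sum_lt_sum
      · intro i _
        by_cases hik : (i : ℕ) < k
        · rw [if_pos hik, if_pos hik]
          exact hqmin i (by rw [Fin.lt_def]; omega)
        · rw [if_neg hik, if_neg hik]
      · exact ⟨p, mem_univ p, by rw [if_pos h1, if_pos h1]; exact hp.2⟩
    omega
  have hmajc1 : ∀ k, partSum a k ≤ partSum c k := by
    intro k
    have h1 := key k
    have h0 := hmaj.1 k
    by_cases h2 : (p : ℕ) < k
    · by_cases h3 : (q : ℕ) < k
      · rw [if_pos h2, if_pos h3] at h1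
        omega
      · rw [if_pos h2, if_neg h3] at h1
        have h4 := hstrict k h2 (by omega)
        omega
    · have h3 : ¬ (q : ℕ) < k := by omega
      rw [if_neg h2, if_neg h3] at h1
      omega
  refine ⟨c, p, q, ⟨hp.1, hD, rfl⟩, ?_, ?_, ?_⟩
  · -- Nonincreasing c
    intro k l hkl
    rcases eq_or_lt_of_le hkl with h | hlt
    · rw [h]
    by_cases hlp : l = p
    · subst hlp
      have hkp : k ≠ p := ne_of_lt hlt
      have hkq : k ≠ q := ne_of_lt (lt_trans hlt hp.1)
      rw [hco k hkp hkq, hcp]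
      have := hb k p (le_of_lt hlt)
      omega
    by_cases hlq : l = q
    · subst hlq
      rw [hcq]
      by_cases hkp : k = p
      · subst hkp; rw [hcp]; omega
      · have hkq : k ≠ q := ne_of_lt hlt
        rw [hco k hkp hkq]
        exact F1 k hlt
    · rw [hco l hlp hlq]
      by_cases hkp : k = p
      · subst hkp
        rw [hcp]
        have := F2 l hlt
        omega
      · by_cases hkq : k = q
        · subst hkq
          rw [hcq]
          have := hb q l (le_of_lt hlt)
          omega
        · rw [hco k hkp hkq]
          exact hb k l (le_of_lt hlt)
  · exact ⟨hmajc1, hmaj.2.trans hsum.symm⟩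
  · apply Finset.sum_lt_sum
    · intro k _
      have h1 := hcb k
      have h2 := hmajc1 k
      omega
    · refine ⟨(q : ℕ), by simp [Finset.mem_range], ?_⟩
      have h1 := key (q : ℕ)
      rw [if_pos hpq', if_neg (lt_irrefl _)] at h1
      have h4 := hstrict (q : ℕ) hpq' le_rfl
      have h5 := hmajc1 (q : ℕ)
      omega

end C4

section C5
variable {n : ℕ}

lemma sum_split_pair (f g : Fin n → ℕ) (i j : Fin n) (hij : i ≠ j)
    (hpair : f i + f j = g i + g j) (hrest : ∀ l, l ≠ i → l ≠ j → f l = g l) :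
    ∑ l, f l = ∑ l, g l := by
  have hjmem : j ∈ univ.erase i := by simp [hij.symm]
  have h1 : ∀ h : Fin n → ℕ, ∑ l, h l = h i + (h j + ∑ l ∈ (univ.erase i).erase j, h l) := by
    intro h
    rw [Finset.add_sum_erase _ h hjmem, Finset.add_sum_erase _ h (mem_univ i)]
  rw [h1 f, h1 g]
  have h2 : ∑ l ∈ (univ.erase i).erase j, f l = ∑ l ∈ (univ.erase i).erase j, g l := by
    apply Finset.sum_congr rfl
    intro l hl
    have h3 := Finset.mem_erase.mp hl
    have h4 := Finset.mem_erase.mp h3.2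
    exact hrest l h4.1 h3.1
  omega

lemma rowSum_split (i j : Fin n) (hij : i ≠ j) (M : Fin n → Fin n → Bool)
    (hsym : ∀ k l, M k l = M l k) (hdiag : ∀ k, M k k = false) :
    rowSum M i = (if M i j then 1 else 0)
      + (univ.filter (fun k => k ≠ i ∧ k ≠ j ∧ M k i = true ∧ M k j = true)).card
      + (univ.filter (fun k => k ≠ i ∧ k ≠ j ∧ M k i = true ∧ M k j = false)).card := by
  have hpt : ∀ k : Fin n, (if M i k then 1 else 0)
      = (if k = j then (if M i j then 1 else 0) else 0)
      + ((if k ≠ i ∧ k ≠ j ∧ M k i = true ∧ M k j = true then 1 else 0)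
      + (if k ≠ i ∧ k ≠ j ∧ M k i = true ∧ M k j = false then 1 else 0)) := by
    intro k
    by_cases h1 : k = i
    · subst h1
      simp [hij, hdiag k]
    · by_cases h2 : k = j
      · subst h2
        simp [hij]
      · rw [if_neg h2, hsym i k]
        cases h3 : M k i <;> cases h4 : M k j <;> simp [h1, h2, h3, h4]
  rw [rowSum, Finset.sum_congr rfl (fun k _ => hpt k), Finset.sum_add_distrib,
    Finset.sum_add_distrib, Finset.sum_ite_eq' univ j, if_pos (mem_univ j),
    ← Finset.card_filter, ← Finset.card_filter]
  ring

end C5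

section C5B
variable {n : ℕ}

def tKey (i j : Fin n) (M : Fin n → Fin n → Bool) :
    Bool × (Fin n → Bool) × (Fin n → Bool) × (Fin n → Fin n → Bool) :=
  (M i j, fun k => M k i && M k j, fun k => M k i || M k j,
   fun k l => if k = i ∨ k = j ∨ l = i ∨ l = j then false else M k l)

def Rset (i j : Fin n) (M : Fin n → Fin n → Bool) : Finset (Fin n) :=
  univ.filter (fun k => k ≠ i ∧ k ≠ j ∧ M k i ≠ M k j)

def wgt (i j : Fin n) (M : Fin n → Fin n → Bool) : ℕ :=
  (if M i j then 1 else 0)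
    + (univ.filter (fun k => k ≠ i ∧ k ≠ j ∧ M k i = true ∧ M k j = true)).card

def SOf (i j : Fin n) (M : Fin n → Fin n → Bool) : Finset (Fin n) :=
  univ.filter (fun k => k ≠ i ∧ k ≠ j ∧ M k i = true ∧ M k j = false)

def decMat (i j : Fin n) (M₀ : Fin n → Fin n → Bool) (S : Finset (Fin n)) :
    Fin n → Fin n → Bool :=
  fun k l =>
    if k = i then
      (if l = i then false else if l = j then M₀ i j
       else (M₀ l i && M₀ l j) || ((M₀ l i != M₀ l j) && decide (l ∈ S)))
    else if k = j then
      (if l = i then M₀ i j else if l = j then false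
       else (M₀ l i && M₀ l j) || ((M₀ l i != M₀ l j) && decide (l ∉ S)))
    else if l = i then (M₀ k i && M₀ k j) || ((M₀ k i != M₀ k j) && decide (k ∈ S))
    else if l = j then (M₀ k i && M₀ k j) || ((M₀ k i != M₀ k j) && decide (k ∉ S))
    else M₀ k l

lemma tKey_eq_iff (i j : Fin n) (M M₀ : Fin n → Fin n → Bool) :
    tKey i j M = tKey i j M₀ ↔
      (M i j = M₀ i j ∧ (∀ k, (M k i && M k j) = (M₀ k i && M₀ k j))
        ∧ (∀ k, (M k i || M k j) = (M₀ k i || M₀ k j))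
        ∧ (∀ k l, k ≠ i → k ≠ j → l ≠ i → l ≠ j → M k l = M₀ k l)) := by
  constructor
  · intro h
    rw [tKey, tKey, Prod.mk.injEq, Prod.mk.injEq, Prod.mk.injEq] at h
    refine ⟨h.1, fun k => congrFun h.2.1 k, fun k => congrFun h.2.2.1 k, ?_⟩
    intro k l hk1 hk2 hl1 hl2
    have := congrFun (congrFun h.2.2.2 k) l
    simpa [hk1, hk2, hl1, hl2] using this
  · rintro ⟨h1, h2, h3, h4⟩
    rw [tKey, tKey, Prod.mk.injEq, Prod.mk.injEq, Prod.mk.injEq]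
    refine ⟨h1, funext h2, funext h3, funext fun k => funext fun l => ?_⟩
    by_cases hc : k = i ∨ k = j ∨ l = i ∨ l = j
    · rw [if_pos hc, if_pos hc]
    · push_neg at hc
      rw [if_neg (by push_neg; exact hc), if_neg (by push_neg; exact hc),
        h4 k l hc.1 hc.2.1 hc.2.2.1 hc.2.2.2]

end C5B

section C5C
variable {n : ℕ}

lemma decMat_symm (i j : Fin n) (hij : i ≠ j) (M₀ : Fin n → Fin n → Bool)
    (hsym : ∀ k l, M₀ k l = M₀ l k) (S : Finset (Fin n)) :
    ∀ k l, decMat i j M₀ S k l = decMat i j M₀ S l k := by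
  intro k l
  unfold decMat
  by_cases hki : k = i
  · by_cases hli : l = i
    · simp [hki, hli]
    · by_cases hlj : l = j
      · simp [hki, hlj, Ne.symm hij]
      · simp [hki, hli, hlj]
  · by_cases hkj : k = j
    · by_cases hli : l = i
      · simp [hki, hkj, hli, Ne.symm hij]
      · by_cases hlj : l = j
        · simp [hkj, hlj]
        · simp [hki, hkj, hli, hlj, Ne.symm hij]
    · by_cases hli : l = i
      · simp [hki, hkj, hli]
      · by_cases hlj : l = j
        · simp [hki, hkj, hli, hlj, Ne.symm hij]
        · simp [hki, hkj, hli, hlj]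
          exact hsym k l

lemma decMat_diag (i j : Fin n) (hij : i ≠ j) (M₀ : Fin n → Fin n → Bool)
    (hdiag : ∀ k, M₀ k k = false) (S : Finset (Fin n)) :
    ∀ k, decMat i j M₀ S k k = false := by
  intro k
  unfold decMat
  by_cases hki : k = i
  · simp [hki]
  · by_cases hkj : k = j
    · simp [hki, hkj, Ne.symm hij]
    · simp [hki, hkj, hdiag k]

lemma SOf_decMat (i j : Fin n) (hij : i ≠ j) (M₀ : Fin n → Fin n → Bool)
    (S : Finset (Fin n)) (hS : S ⊆ Rset i j M₀) :
    SOf i j (decMat i j M₀ S) = S := by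
  ext k
  simp only [SOf, mem_filter, mem_univ, true_and]
  constructor
  · rintro ⟨hk1, hk2, hk3, hk4⟩
    rw [decMat, if_neg hk1, if_neg hk2, if_pos rfl] at hk3
    rw [decMat, if_neg hk1, if_neg hk2, if_neg (Ne.symm hij), if_pos rfl] at hk4
    cases h1 : M₀ k i <;> cases h2 : M₀ k j <;> rw [h1, h2] at hk3 hk4 <;> simp_all
  · intro hk
    have hkR := hS hk
    simp only [Rset, mem_filter, mem_univ, true_and] at hkR
    obtain ⟨hk1, hk2, hk3⟩ := hkR
    refine ⟨hk1, hk2, ?_, ?_⟩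
    · rw [decMat, if_neg hk1, if_neg hk2, if_pos rfl]
      cases h1 : M₀ k i <;> cases h2 : M₀ k j <;> rw [h1, h2] at hk3 <;> simp_all
    · rw [decMat, if_neg hk1, if_neg hk2, if_neg (Ne.symm hij), if_pos rfl]
      cases h1 : M₀ k i <;> cases h2 : M₀ k j <;> rw [h1, h2] at hk3 <;> simp_all

end C5C

section C5D
variable {n : ℕ}

lemma both_decMat (i j : Fin n) (hij : i ≠ j) (M₀ : Fin n → Fin n → Bool) (S : Finset (Fin n)) :
    univ.filter (fun k => k ≠ i ∧ k ≠ j ∧ decMat i j M₀ S k i = true ∧ decMat i j M₀ S k j = true)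
      = univ.filter (fun k => k ≠ i ∧ k ≠ j ∧ M₀ k i = true ∧ M₀ k j = true) := by
  ext k
  simp only [mem_filter, mem_univ, true_and, and_congr_right_iff]
  intro hk1 hk2
  rw [decMat, if_neg hk1, if_neg hk2, if_pos rfl,
    decMat, if_neg hk1, if_neg hk2, if_neg (Ne.symm hij), if_pos rfl]
  cases h1 : M₀ k i <;> cases h2 : M₀ k j <;> by_cases h3 : k ∈ S <;> simp [h1, h2, h3]

lemma eset_decMat (i j : Fin n) (hij : i ≠ j) (M₀ : Fin n → Fin n → Bool)
    (S : Finset (Fin n)) (hS : S ⊆ Rset i j M₀) :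
    univ.filter (fun k => k ≠ j ∧ k ≠ i ∧ decMat i j M₀ S k j = true ∧ decMat i j M₀ S k i = false)
      = Rset i j M₀ \ S := by
  ext k
  simp only [mem_filter, mem_univ, true_and, mem_sdiff, Rset]
  constructor
  · rintro ⟨hk1, hk2, hk3, hk4⟩
    rw [decMat, if_neg hk2, if_neg hk1, if_neg (Ne.symm hij), if_pos rfl] at hk3
    rw [decMat, if_neg hk2, if_neg hk1, if_pos rfl] at hk4
    cases h1 : M₀ k i <;> cases h2 : M₀ k j <;> rw [h1, h2] at hk3 hk4 <;>
      by_cases h3 : k ∈ S <;> simp_all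
  · rintro ⟨⟨hk1, hk2, hk3⟩, hkS⟩
    refine ⟨hk2, hk1, ?_, ?_⟩
    · rw [decMat, if_neg hk1, if_neg hk2, if_neg (Ne.symm hij), if_pos rfl]
      cases h1 : M₀ k i <;> cases h2 : M₀ k j <;> rw [h1, h2] at hk3 <;> simp_all
    · rw [decMat, if_neg hk1, if_neg hk2, if_pos rfl]
      cases h1 : M₀ k i <;> cases h2 : M₀ k j <;> rw [h1, h2] at hk3 <;> simp_all

lemma key_decMat (i j : Fin n) (hij : i ≠ j) (M₀ : Fin n → Fin n → Bool)
    (hsym : ∀ k l, M₀ k l = M₀ l k) (hdiag : ∀ k, M₀ k k = false) (S : Finset (Fin n)) :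
    tKey i j (decMat i j M₀ S) = tKey i j M₀ := by
  rw [tKey_eq_iff]
  have hdij : decMat i j M₀ S i j = M₀ i j := by
    rw [decMat, if_pos rfl, if_neg (Ne.symm hij), if_pos rfl]
  refine ⟨hdij, ?_, ?_, ?_⟩
  · intro k
    by_cases hk1 : k = i
    · rw [hk1, decMat_diag i j hij M₀ hdiag S i, hdiag i]
      simp
    · by_cases hk2 : k = j
      · rw [hk2, decMat_diag i j hij M₀ hdiag S j, hdiag j]
        simp
      · rw [decMat, if_neg hk1, if_neg hk2, if_pos rfl,
          decMat, if_neg hk1, if_neg hk2, if_neg (Ne.symm hij), if_pos rfl]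
        cases h1 : M₀ k i <;> cases h2 : M₀ k j <;> by_cases h3 : k ∈ S <;> simp [h1, h2, h3]
  · intro k
    by_cases hk1 : k = i
    · rw [hk1]
      simp [decMat_diag i j hij M₀ hdiag S i, hdiag i, hdij]
    · by_cases hk2 : k = j
      · rw [hk2]
        have hji : decMat i j M₀ S j i = M₀ i j := by
          rw [decMat, if_neg (Ne.symm hij), if_pos rfl, if_pos rfl]
        simp [decMat_diag i j hij M₀ hdiag S j, hdiag j, hji, hsym j i]
      · rw [decMat, if_neg hk1, if_neg hk2, if_pos rfl,
          decMat, if_neg hk1, if_neg hk2, if_neg (Ne.symm hij), if_pos rfl]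
        cases h1 : M₀ k i <;> cases h2 : M₀ k j <;> by_cases h3 : k ∈ S <;> simp [h1, h2, h3]
  · intro k l hk1 hk2 hl1 hl2
    rw [decMat, if_neg hk1, if_neg hk2, if_neg hl1, if_neg hl2]

lemma rowSum_decMat_other (i j : Fin n) (hij : i ≠ j) (M₀ : Fin n → Fin n → Bool)
    (S : Finset (Fin n)) (k : Fin n) (hk1 : k ≠ i) (hk2 : k ≠ j) :
    rowSum (decMat i j M₀ S) k = rowSum M₀ k := by
  apply sum_split_pair _ _ i j hij
  · rw [decMat, if_neg hk1, if_neg hk2, if_pos rfl,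
      decMat, if_neg hk1, if_neg hk2, if_neg (Ne.symm hij), if_pos rfl]
    cases h1 : M₀ k i <;> cases h2 : M₀ k j <;> by_cases h3 : k ∈ S <;> simp [h1, h2, h3]
  · intro l hl1 hl2
    rw [decMat, if_neg hk1, if_neg hk2, if_neg hl1, if_neg hl2]

end C5D

section C5E
variable {n : ℕ}

lemma rowSum_decMat_i (i j : Fin n) (hij : i ≠ j) (M₀ : Fin n → Fin n → Bool)
    (hsym : ∀ k l, M₀ k l = M₀ l k) (hdiag : ∀ k, M₀ k k = false)
    (S : Finset (Fin n)) (hS : S ⊆ Rset i j M₀) :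
    rowSum (decMat i j M₀ S) i = wgt i j M₀ + S.card := by
  rw [rowSum_split i j hij _ (decMat_symm i j hij M₀ hsym S) (decMat_diag i j hij M₀ hdiag S)]
  have h1 : decMat i j M₀ S i j = M₀ i j := by
    rw [decMat, if_pos rfl, if_neg (Ne.symm hij), if_pos rfl]
  have h3 := SOf_decMat i j hij M₀ S hS
  rw [SOf] at h3
  rw [h1, both_decMat i j hij M₀ S, h3, wgt]

lemma rowSum_decMat_j (i j : Fin n) (hij : i ≠ j) (M₀ : Fin n → Fin n → Bool)
    (hsym : ∀ k l, M₀ k l = M₀ l k) (hdiag : ∀ k, M₀ k k = false)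
    (S : Finset (Fin n)) (hS : S ⊆ Rset i j M₀) :
    rowSum (decMat i j M₀ S) j = wgt i j M₀ + ((Rset i j M₀).card - S.card) := by
  rw [rowSum_split j i (Ne.symm hij) _ (decMat_symm i j hij M₀ hsym S) (decMat_diag i j hij M₀ hdiag S)]
  have h1 : decMat i j M₀ S j i = M₀ i j := by
    rw [decMat, if_neg (Ne.symm hij), if_pos rfl, if_pos rfl]
  have h2 : univ.filter (fun k => k ≠ j ∧ k ≠ i ∧ decMat i j M₀ S k j = true ∧ decMat i j M₀ S k i = true)
      = univ.filter (fun k => k ≠ i ∧ k ≠ j ∧ decMat i j M₀ S k i = true ∧ decMat i j M₀ S k j = true) := by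
    apply Finset.filter_congr
    intro k _
    constructor
    · rintro ⟨a, b, c, d⟩; exact ⟨b, a, d, c⟩
    · rintro ⟨a, b, c, d⟩; exact ⟨b, a, d, c⟩
  rw [h1, h2, both_decMat i j hij M₀ S, eset_decMat i j hij M₀ S hS,
    Finset.card_sdiff_of_subset hS, wgt]

lemma SOf_sub_Rset (i j : Fin n) (M M₀ : Fin n → Fin n → Bool)
    (hK : tKey i j M = tKey i j M₀) : SOf i j M ⊆ Rset i j M₀ := by
  obtain ⟨hK1, hK2, hK3, hK4⟩ := (tKey_eq_iff i j M M₀).mp hK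
  intro k hk
  simp only [SOf, mem_filter, mem_univ, true_and] at hk
  obtain ⟨h1, h2, h3, h4⟩ := hk
  simp only [Rset, mem_filter, mem_univ, true_and]
  refine ⟨h1, h2, ?_⟩
  have e2 := hK2 k
  have e3 := hK3 k
  rw [h3, h4] at e2 e3
  cases c1 : M₀ k i <;> cases c2 : M₀ k j <;> simp_all

lemma both_M_eq (i j : Fin n) (M M₀ : Fin n → Fin n → Bool)
    (hK : tKey i j M = tKey i j M₀) :
    univ.filter (fun k => k ≠ i ∧ k ≠ j ∧ M k i = true ∧ M k j = true)
      = univ.filter (fun k => k ≠ i ∧ k ≠ j ∧ M₀ k i = true ∧ M₀ k j = true) := by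
  obtain ⟨hK1, hK2, hK3, hK4⟩ := (tKey_eq_iff i j M M₀).mp hK
  apply Finset.filter_congr
  intro k _
  have e2 := hK2 k
  constructor
  · rintro ⟨a, b, c, d⟩
    rw [c, d] at e2
    refine ⟨a, b, ?_⟩
    cases c1 : M₀ k i <;> cases c2 : M₀ k j <;> simp_all
  · rintro ⟨a, b, c, d⟩
    rw [c, d] at e2
    refine ⟨a, b, ?_⟩
    cases c1 : M k i <;> cases c2 : M k j <;> simp_all

lemma eset_M (i j : Fin n) (M M₀ : Fin n → Fin n → Bool)
    (hK : tKey i j M = tKey i j M₀) :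
    univ.filter (fun k => k ≠ j ∧ k ≠ i ∧ M k j = true ∧ M k i = false)
      = Rset i j M₀ \ SOf i j M := by
  obtain ⟨hK1, hK2, hK3, hK4⟩ := (tKey_eq_iff i j M M₀).mp hK
  ext k
  simp only [mem_filter, mem_univ, true_and, mem_sdiff, Rset, SOf]
  have e2 := hK2 k
  have e3 := hK3 k
  constructor
  · rintro ⟨a, b, c, d⟩
    rw [c, d] at e2 e3
    refine ⟨⟨b, a, ?_⟩, ?_⟩
    · cases c1 : M₀ k i <;> cases c2 : M₀ k j <;> simp_all
    · simp only [mem_filter, mem_univ, true_and, not_and]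
      intro _ _ h
      rw [h] at d
      exact absurd d (by simp)
  · rintro ⟨⟨a, b, c⟩, hns⟩
    simp only [mem_filter, mem_univ, true_and, not_and] at hns
    have hns2 := hns a b
    refine ⟨b, a, ?_, ?_⟩ <;>
    · cases c1 : M k i <;> cases c2 : M k j <;> rw [c1, c2] at e2 e3 <;> simp_all

lemma decMat_SOf (i j : Fin n) (hij : i ≠ j) (M M₀ : Fin n → Fin n → Bool)
    (hMsym : ∀ k l, M k l = M l k) (hMdiag : ∀ k, M k k = false)
    (hK : tKey i j M = tKey i j M₀) :
    decMat i j M₀ (SOf i j M) = M := by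
  obtain ⟨hK1, hK2, hK3, hK4⟩ := (tKey_eq_iff i j M M₀).mp hK
  have hxor : ∀ a b : Bool, (a != b) = ((a || b) && !(a && b)) := by decide
  funext k l
  have hmem : ∀ m : Fin n, m ≠ i → m ≠ j → (m ∈ SOf i j M ↔ (M m i = true ∧ M m j = false)) := by
    intro m h1 h2
    simp [SOf, h1, h2]
  by_cases hki : k = i
  · rw [hki, decMat]
    rw [if_pos rfl]
    by_cases hli : l = i
    · rw [hli, if_pos rfl, hMdiag i]
    · rw [if_neg hli]
      by_cases hlj : l = j
      · rw [hlj, if_pos rfl, hK1]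
      · rw [if_neg hlj, hxor, ← hK2 l, ← hK3 l, hMsym i l]
        cases c1 : M l i <;> cases c2 : M l j <;>
          simp [c1, c2, hmem l hli hlj]
  · by_cases hkj : k = j
    · rw [hkj, decMat, if_neg (Ne.symm hij), if_pos rfl]
      by_cases hli : l = i
      · rw [hli, if_pos rfl, ← hK1]
        exact hMsym i j
      · rw [if_neg hli]
        by_cases hlj : l = j
        · rw [hlj, if_pos rfl, hMdiag j]
        · rw [if_neg hlj, hxor, ← hK2 l, ← hK3 l, hMsym j l]
          cases c1 : M l i <;> cases c2 : M l j <;>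
            simp [c1, c2, hmem l hli hlj]
    · rw [decMat, if_neg hki, if_neg hkj]
      by_cases hli : l = i
      · rw [hli, if_pos rfl, hxor, ← hK2 k, ← hK3 k]
        cases c1 : M k i <;> cases c2 : M k j <;>
          simp [c1, c2, hmem k hki hkj]
      · rw [if_neg hli]
        by_cases hlj : l = j
        · rw [hlj, if_pos rfl, hxor, ← hK2 k, ← hK3 k]
          cases c1 : M k i <;> cases c2 : M k j <;>
            simp [c1, c2, hmem k hki hkj]
        · rw [if_neg hlj]
          exact (hK4 k l hki hkj hli hlj).symm

end C5E

section C5F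
variable {n : ℕ}

lemma fiber_card (i j : Fin n) (hij : i ≠ j) (M₀ : Fin n → Fin n → Bool)
    (hsym : ∀ k l, M₀ k l = M₀ l k) (hdiag : ∀ k, M₀ k k = false)
    (c : Fin n → ℕ) (hrow : ∀ k, k ≠ i → k ≠ j → rowSum M₀ k = c k) :
    ((real3 c).filter (fun M => tKey i j M = tKey i j M₀)).card
      = ((Rset i j M₀).powerset.filter (fun S =>
          S.card + wgt i j M₀ = c i ∧ ((Rset i j M₀).card - S.card) + wgt i j M₀ = c j)).card := by
  apply Finset.card_bij' (fun M _ => SOf i j M) (fun S _ => decMat i j M₀ S)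
  · -- forward membership
    intro M hM
    rw [mem_filter] at hM
    obtain ⟨hMr, hK⟩ := hM
    rw [real3, mem_filter] at hMr
    obtain ⟨-, hMsym, hMdiag, hMrow⟩ := hMr
    obtain ⟨hK1, hK2, hK3, hK4⟩ := (tKey_eq_iff i j M M₀).mp hK
    rw [mem_filter]
    refine ⟨mem_powerset.mpr (SOf_sub_Rset i j M M₀ hK), ?_, ?_⟩
    · have h1 := rowSum_split i j hij M hMsym hMdiag
      rw [hMrow i, hK1, both_M_eq i j M M₀ hK] at h1
      rw [wgt]
      rw [SOf]
      omega
    · have h1 := rowSum_split j i (Ne.symm hij) M hMsym hMdiag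
      have h2 : univ.filter (fun k => k ≠ j ∧ k ≠ i ∧ M k j = true ∧ M k i = true)
          = univ.filter (fun k => k ≠ i ∧ k ≠ j ∧ M k i = true ∧ M k j = true) := by
        apply Finset.filter_congr
        intro k _
        constructor
        · rintro ⟨a, b, c, d⟩; exact ⟨b, a, d, c⟩
        · rintro ⟨a, b, c, d⟩; exact ⟨b, a, d, c⟩
      rw [hMrow j, hMsym j i, hK1, h2, both_M_eq i j M M₀ hK,
        eset_M i j M M₀ hK, Finset.card_sdiff_of_subset (SOf_sub_Rset i j M M₀ hK)] at h1
      rw [wgt]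
      omega
  · -- backward membership
    intro S hS
    rw [mem_filter, mem_powerset] at hS
    obtain ⟨hSR, hc1, hc2⟩ := hS
    rw [mem_filter]
    refine ⟨?_, key_decMat i j hij M₀ hsym hdiag S⟩
    rw [real3, mem_filter]
    refine ⟨mem_univ _, decMat_symm i j hij M₀ hsym S, decMat_diag i j hij M₀ hdiag S, ?_⟩
    intro k
    by_cases hk1 : k = i
    · rw [hk1, rowSum_decMat_i i j hij M₀ hsym hdiag S hSR]
      omega
    · by_cases hk2 : k = j
      · rw [hk2, rowSum_decMat_j i j hij M₀ hsym hdiag S hSR]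
        omega
      · rw [rowSum_decMat_other i j hij M₀ S k hk1 hk2]
        exact hrow k hk1 hk2
  · -- left inverse
    intro M hM
    rw [mem_filter] at hM
    obtain ⟨hMr, hK⟩ := hM
    rw [real3, mem_filter] at hMr
    obtain ⟨-, hMsym, hMdiag, -⟩ := hMr
    exact decMat_SOf i j hij M M₀ hMsym hMdiag hK
  · -- right inverse
    intro S hS
    rw [mem_filter, mem_powerset] at hS
    exact SOf_decMat i j hij M₀ S hS.1

end C5F

section C5G
variable {n : ℕ}

lemma choose_lt_helper (r x : ℕ) (hx1 : 1 ≤ x) (hxr : x ≤ r) (h2x : r + 2 ≤ 2 * x) :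
    r.choose x < r.choose (x - 1) := by
  have h1 := Nat.choose_succ_right_eq r (x - 1)
  have hx1' : x - 1 + 1 = x := by omega
  rw [hx1'] at h1
  have h2 : 0 < r.choose (x - 1) := Nat.choose_pos (by omega)
  have hd : r - (x - 1) < x := by omega
  have hlt : r.choose x * x < r.choose (x - 1) * x := by
    calc r.choose x * x = r.choose (x - 1) * (r - (x - 1)) := h1
      _ < r.choose (x - 1) * x := by
          exact mul_lt_mul_of_pos_left hd h2
  exact lt_of_mul_lt_mul_right hlt (Nat.zero_le x)

lemma pow_filter_cmp (R : Finset (Fin n)) (w A B : ℕ) (hAB : B + 2 ≤ A) :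
    ((R.powerset.filter (fun S => S.card + w = A ∧ (R.card - S.card) + w = B)).card
      ≤ (R.powerset.filter (fun S => S.card + w = A - 1 ∧ (R.card - S.card) + w = B + 1)).card)
    ∧ ((R.powerset.filter (fun S => S.card + w = A - 1 ∧ (R.card - S.card) + w = B + 1)).Nonempty →
      (R.powerset.filter (fun S => S.card + w = A ∧ (R.card - S.card) + w = B)).card
        < (R.powerset.filter (fun S => S.card + w = A - 1 ∧ (R.card - S.card) + w = B + 1)).card) := by
  set r := R.card with hr
  set s' := R.powerset.filter (fun S => S.card + w = A ∧ (r - S.card) + w = B) with hs'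
  set s := R.powerset.filter (fun S => S.card + w = A - 1 ∧ (r - S.card) + w = B + 1) with hs
  have coreA : s'.Nonempty → s'.card < s.card := by
    rintro ⟨S0, hS0⟩
    rw [hs', mem_filter, mem_powerset] at hS0
    obtain ⟨hS0R, hx1, hx2⟩ := hS0
    set x := S0.card with hx
    have hxr : x ≤ r := by rw [hr, hx]; exact card_le_card hS0R
    have h2x : r + 2 ≤ 2 * x := by omega
    have hxpos : 1 ≤ x := by omega
    have he1 : s' = R.powersetCard x := by
      rw [powersetCard_eq_filter, hs']
      ext S
      simp only [mem_filter, mem_powerset]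
      constructor
      · rintro ⟨h, h1, h2⟩; exact ⟨h, by omega⟩
      · rintro ⟨h, h1⟩
        have : S.card ≤ r := by rw [hr]; exact card_le_card h
        exact ⟨h, by omega, by omega⟩
    have he2 : s = R.powersetCard (x - 1) := by
      rw [powersetCard_eq_filter, hs]
      ext S
      simp only [mem_filter, mem_powerset]
      constructor
      · rintro ⟨h, h1, h2⟩; exact ⟨h, by omega⟩
      · rintro ⟨h, h1⟩
        have : S.card ≤ r := by rw [hr]; exact card_le_card h
        exact ⟨h, by omega, by omega⟩
    rw [he1, he2, card_powersetCard, card_powersetCard, ← hr]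
    exact choose_lt_helper r x hxpos hxr h2x
  have coreB : s.Nonempty → s'.card < s.card := by
    rintro ⟨S0, hS0⟩
    have hsne : s.Nonempty := ⟨S0, hS0⟩
    rw [hs, mem_filter, mem_powerset] at hS0
    obtain ⟨hS0R, hy1, hy2⟩ := hS0
    set y := S0.card with hy
    have hyr : y ≤ r := by rw [hr, hy]; exact card_le_card hS0R
    have h2y : r ≤ 2 * y := by omega
    by_cases hcase : y = r
    · have hempty : s' = ∅ := by
        apply Finset.eq_empty_of_forall_notMem
        intro S hS
        rw [hs', mem_filter, mem_powerset] at hS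
        obtain ⟨hSR, hz1, hz2⟩ := hS
        have : S.card ≤ r := by rw [hr]; exact card_le_card hSR
        omega
      rw [hempty]
      simpa using Finset.card_pos.mpr hsne
    · have hylt : y < r := by omega
      have he1 : s' = R.powersetCard (y + 1) := by
        rw [powersetCard_eq_filter, hs']
        ext S
        simp only [mem_filter, mem_powerset]
        constructor
        · rintro ⟨h, h1, h2⟩; exact ⟨h, by omega⟩
        · rintro ⟨h, h1⟩
          have : S.card ≤ r := by rw [hr]; exact card_le_card h
          exact ⟨h, by omega, by omega⟩
      have he2 : s = R.powersetCard y := by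
        rw [powersetCard_eq_filter, hs]
        ext S
        simp only [mem_filter, mem_powerset]
        constructor
        · rintro ⟨h, h1, h2⟩; exact ⟨h, by omega⟩
        · rintro ⟨h, h1⟩
          have : S.card ≤ r := by rw [hr]; exact card_le_card h
          exact ⟨h, by omega, by omega⟩
      rw [he1, he2, card_powersetCard, card_powersetCard, ← hr]
      have := choose_lt_helper r (y + 1) (by omega) (by omega) (by omega)
      simpa using this
  constructor
  · by_cases hne : s'.Nonempty
    · exact le_of_lt (coreA hne)
    · rw [Finset.not_nonempty_iff_eq_empty] at hne
      rw [hne]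
      simp
  · exact coreB

end C5G

section C5H
variable {n : ℕ}

lemma unitTransfer_N3 (a' a : Fin n → ℕ) (i j : Fin n) (h : UnitTransfer a' a i j) :
    N3 a' ≤ N3 a ∧ (0 < N3 a → N3 a' < N3 a) := by
  obtain ⟨hlt, hD, hadef⟩ := h
  have hij : i ≠ j := ne_of_lt hlt
  have hai : a i = a' i - 1 := by
    rw [hadef, Function.update_apply, if_neg hij, Function.update_apply, if_pos rfl]
  have haj : a j = a' j + 1 := by
    rw [hadef, Function.update_apply, if_pos rfl]
  have hao : ∀ k, k ≠ i → k ≠ j → a k = a' k := by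
    intro k h1 h2
    rw [hadef, Function.update_apply, if_neg h2, Function.update_apply, if_neg h1]
  set t := (real3 a' ∪ real3 a).image (tKey i j) with ht
  have h1 : (real3 a').card = ∑ κ ∈ t, ((real3 a').filter (fun M => tKey i j M = κ)).card :=
    Finset.card_eq_sum_card_fiberwise (fun M hM => mem_image_of_mem _ (mem_union_left _ hM))
  have h2 : (real3 a).card = ∑ κ ∈ t, ((real3 a).filter (fun M => tKey i j M = κ)).card :=
    Finset.card_eq_sum_card_fiberwise (fun M hM => mem_image_of_mem _ (mem_union_right _ hM))
  have hterm : ∀ κ ∈ t,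
      ((real3 a').filter (fun M => tKey i j M = κ)).card
        ≤ ((real3 a).filter (fun M => tKey i j M = κ)).card ∧
      (((real3 a).filter (fun M => tKey i j M = κ)).Nonempty →
        ((real3 a').filter (fun M => tKey i j M = κ)).card
          < ((real3 a).filter (fun M => tKey i j M = κ)).card) := by
    intro κ hκ
    rw [ht, mem_image] at hκ
    obtain ⟨M₀, hM₀mem, hM₀key⟩ := hκ
    have hM₀ : (∀ k l, M₀ k l = M₀ l k) ∧ (∀ k, M₀ k k = false) ∧
        (∀ k, k ≠ i → k ≠ j → rowSum M₀ k = a' k) := by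
      rw [mem_union] at hM₀mem
      rcases hM₀mem with hm | hm <;> rw [real3, mem_filter] at hm
      · exact ⟨hm.2.1, hm.2.2.1, fun k _ _ => hm.2.2.2 k⟩
      · refine ⟨hm.2.1, hm.2.2.1, fun k hk1 hk2 => ?_⟩
        rw [hm.2.2.2 k, hao k hk1 hk2]
    obtain ⟨hsym, hdiag, hrowo⟩ := hM₀
    have hrowa : ∀ k, k ≠ i → k ≠ j → rowSum M₀ k = a k := by
      intro k hk1 hk2
      rw [hrowo k hk1 hk2, hao k hk1 hk2]
    have hf1 := fiber_card i j hij M₀ hsym hdiag a' hrowo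
    have hf2 := fiber_card i j hij M₀ hsym hdiag a hrowa
    rw [← hM₀key]
    have hcmp := pow_filter_cmp (Rset i j M₀) (wgt i j M₀) (a' i) (a' j) hD
    rw [hai, haj] at hf2
    rw [hf1, hf2]
    refine ⟨hcmp.1, fun hne => hcmp.2 ?_⟩
    have hpos : 0 < ((real3 a).filter (fun M => tKey i j M = tKey i j M₀)).card :=
      Finset.card_pos.mpr hne
    rw [hf2] at hpos
    exact Finset.card_pos.mp hpos
  constructor
  · rw [N3_eq_card, N3_eq_card, h1, h2]
    exact Finset.sum_le_sum (fun κ hκ => (hterm κ hκ).1)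
  · intro hpos
    rw [N3_eq_card] at hpos
    obtain ⟨M0, hM0⟩ := Finset.card_pos.mp hpos
    rw [N3_eq_card, N3_eq_card, h1, h2]
    apply Finset.sum_lt_sum (fun κ hκ => (hterm κ hκ).1)
    refine ⟨tKey i j M0, mem_image_of_mem _ (mem_union_right _ hM0), ?_⟩
    apply (hterm (tKey i j M0) (mem_image_of_mem _ (mem_union_right _ hM0))).2
    exact ⟨M0, mem_filter.mpr ⟨hM0, rfl⟩⟩

end C5H

section C6
variable {n : ℕ}

lemma main_sorted (a : Fin n → ℕ) (ha : Nonincreasing a) (hg : 0 < N3 a) :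
    ∀ N : ℕ, ∀ b : Fin n → ℕ, Nonincreasing b → Majorized a b → muMeasure a b ≤ N →
      (N3 b ≤ N3 a ∧ (a ≠ b → N3 b < N3 a)) := by
  intro N
  induction N with
  | zero =>
    intro b hb hmaj hmu
    have hz := Finset.sum_eq_zero_iff.mp (Nat.le_zero.mp hmu)
    have heq : a = b := by
      apply eq_of_partSum_eq
      intro k
      by_cases hkn : k ≤ n
      · have h1 := hz k (Finset.mem_range.mpr (by omega))
        have h2 := hmaj.1 k
        omega
      · rw [partSum_of_ge a (by omega), partSum_of_ge b (by omega)]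
        exact hmaj.2
    exact ⟨le_of_eq (by rw [heq]), fun hne => absurd heq hne⟩
  | succ N ih =>
    intro b hb hmaj hmu
    by_cases hne : a = b
    · exact ⟨le_of_eq (by rw [hne]), fun h => absurd hne h⟩
    · obtain ⟨c, p, q, hut, hc, hmajc, hmulc⟩ := hlp_step a b ha hb hmaj hne
      have hstep := unitTransfer_N3 b c p q hut
      have hihc := ih c hc hmajc (by omega)
      by_cases hac : a = c
      · have hcpos : 0 < N3 c := by rw [← hac]; exact hg
        have hbc := hstep.2 hcpos
        have hca : N3 c = N3 a := by rw [hac]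
        exact ⟨by omega, fun _ => by omega⟩
      · have h3 := hihc.2 hac
        have h4 := hstep.1
        exact ⟨by omega, fun _ => by omega⟩

end C6


theorem stmt19 {n : ℕ} (a a' : Fin n → ℕ)
    (hmono : Nonincreasing a) (hg : Graphic a)
    (hmaj : Majorized a a') (hne : a ≠ a') :
    N3 a' < N3 a := by
  obtain ⟨σ, hbmono⟩ := exists_sorted a'
  set b := a' ∘ σ with hbdef
  have hb3 : N3 b = N3 a' := N3_comp_perm a' σ
  have hdom : ∀ k, partSum a' k ≤ partSum b k :=
    partSum_le_sorted a' b σ hbdef hbmono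
  have hsumb : ∑ i, b i = ∑ i, a' i := Equiv.sum_comp σ a'
  have hmajb : Majorized a b :=
    ⟨fun k => le_trans (hmaj.1 k) (hdom k), by rw [hmaj.2, hsumb]⟩
  have hneb : a ≠ b := by
    intro heq
    apply hne
    apply eq_of_partSum_eq
    intro k
    have h1 := hmaj.1 k
    have h2 := hdom k
    rw [← heq] at h2
    have h3 := hmajb.1 k
    rw [← heq] at h3
    omega
  have hfin := (main_sorted a hmono hg (muMeasure a b) b hbmono hmajb le_rfl).2 hneb
  rw [hb3] at hfin
  exact hfin
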